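/- arXiv:1605.02121 — 3 statements merged into one kernel-verified Lean document; each statement's English description precedes it below -/
import Mathlib

section
/- Let D^‡ be the N×N matrix satisfying (D^‡ p)_i = ṗ(τ_i) for 1 ≤ i < N and (D^‡ p)_N = ṗ(τ_N) - p(τ_N)/ω_N for every polynomial p of degree at most N-1, where p is the vector of values p(τ_i), 1 ≤ i ≤ N, τ_N is the right endpoint, and ω_N > 0. Then D^‡ is invertible. -/
open Polynomial

/-- The matrix `D^‡`, acting on value vectors of polynomials `p` of degree at most `N-1` by
`(D^‡ p)_i = ṗ(τ_i)` for `i < N` and `(D^‡ p)_N = ṗ(τ_N) - p(τ_N)/ω_N`, is invertible. -/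
theorem stmt2 (N : ℕ) (hN : 0 < N) (τ : Fin N → ℝ) (hτ : StrictMono τ)
    (ωN : ℝ) (hω : 0 < ωN)
    (Ddag : Matrix (Fin N) (Fin N) ℝ)
    (hD : ∀ p : Polynomial ℝ, p.natDegree ≤ N - 1 → ∀ i : Fin N,
      Ddag.mulVec (fun j => p.eval (τ j)) i =
        (Polynomial.derivative p).eval (τ i) -
          (if (i : ℕ) = N - 1 then p.eval (τ i) / ωN else 0)) :
    IsUnit Ddag := by
  rw [← Matrix.mulVec_injective_iff_isUnit]
  have : Ddag.mulVec = Ddag.mulVecLin := rfl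
  rw [this, ← LinearMap.coe_coe, ← LinearMap.ker_eq_bot, LinearMap.ker_eq_bot']
  intro x hx
  have hinj : Set.InjOn τ (Finset.univ : Finset (Fin N)) :=
    fun a _ b _ h => hτ.injective h
  set p := Lagrange.interpolate Finset.univ τ x with hp
  have heval : ∀ j : Fin N, p.eval (τ j) = x j := fun j =>
    Lagrange.eval_interpolate_at_node x hinj (Finset.mem_univ j)
  have hdeglt : p.degree < (N : ℕ) := by
    have h := Lagrange.degree_interpolate_lt x hinj
    simp only [Finset.card_univ, Fintype.card_fin] at h
    exact h
  have hnd : p.natDegree ≤ N - 1 := by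
    rcases eq_or_ne p 0 with h0 | h0
    · simp [h0]
    · have := (Polynomial.natDegree_lt_iff_degree_lt h0).mpr hdeglt
      omega
  have hmv : ∀ i : Fin N, Ddag.mulVec x i =
      (Polynomial.derivative p).eval (τ i) -
        (if (i : ℕ) = N - 1 then p.eval (τ i) / ωN else 0) := by
    intro i
    have := hD p hnd i
    have hxv : (fun j => p.eval (τ j)) = x := funext heval
    rwa [hxv] at this
  have hx0 : ∀ i : Fin N, (0 : ℝ) =
      (Polynomial.derivative p).eval (τ i) -
        (if (i : ℕ) = N - 1 then p.eval (τ i) / ωN else 0) := by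
    intro i
    have := hmv i
    rw [show Ddag.mulVec x = 0 from hx] at this
    simp only [Pi.zero_apply] at this
    exact this

  -- show p = 0
  have hp0 : p = 0 := by
    by_contra h0
    set L : Fin N := ⟨N - 1, by omega⟩ with hL
    have hder : Polynomial.derivative p = 0 := by
      apply Polynomial.eq_zero_of_degree_lt_of_eval_index_eq_zero
        (v := τ) (s := Finset.univ.erase L) (fun a ha b hb h => hτ.injective h)
      · have hcard : (Finset.univ.erase L).card = N - 1 := by
          rw [Finset.card_erase_of_mem (Finset.mem_univ L)]
          simp
        rw [hcard]
        calc (Polynomial.derivative p).degree < p.degree :=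
              Polynomial.degree_derivative_lt h0
          _ ≤ ((N - 1 : ℕ) : WithBot ℕ) := Polynomial.degree_le_of_natDegree_le hnd
      · intro i hi
        have hiL : (i : ℕ) ≠ N - 1 := by
          have : i ≠ L := (Finset.mem_erase.mp hi).1
          simpa [hL, Fin.ext_iff] using this
        have := hx0 i
        rw [if_neg hiL] at this
        linarith
    have hnd0 : p.natDegree = 0 := Polynomial.natDegree_eq_zero_of_derivative_eq_zero hder
    obtain ⟨c, hc⟩ := Polynomial.natDegree_eq_zero.mp hnd0
    have := hx0 L
    rw [if_pos rfl, hder] at this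
    simp [← hc] at this
    rcases this with h | h
    · exact h0 (by simp [← hc, h])
    · exact absurd h (ne_of_gt hω)
  funext j
  rw [← heval j, hp0]
  simp
end

section
/- With D^‡ as defined (acting on value vectors of polynomials p of degree at most N-1 by (D^‡p)_i = ṗ(τ_i) for i < N and (D^‡p)_N = ṗ(τ_N) - p(τ_N)/ω_N), applying D^‡ to the constant polynomial 1 gives D^‡ 1 = -e_N/ω_N, and hence (D^‡)^{-1} e_N = -ω_N 1, i.e., every entry of the last column of (D^‡)^{-1} equals -ω_N. -/
open Polynomial

/-- Applying `D^‡` to the constant polynomial 1 gives `D^‡ 1 = -e_N/ω_N`, and hence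
`(D^‡)⁻¹ e_N = -ω_N 1`, i.e. every entry of the last column of `(D^‡)⁻¹` equals `-ω_N`. -/
theorem stmt3 (N : ℕ) (hN : 0 < N) (τ : Fin N → ℝ) (hτ : StrictMono τ)
    (ωN : ℝ) (hω : 0 < ωN)
    (Ddag : Matrix (Fin N) (Fin N) ℝ) (hInv : IsUnit Ddag.det)
    (hD : ∀ p : Polynomial ℝ, p.natDegree ≤ N - 1 → ∀ i : Fin N,
      Ddag.mulVec (fun j => p.eval (τ j)) i =
        (Polynomial.derivative p).eval (τ i) -
          (if (i : ℕ) = N - 1 then p.eval (τ i) / ωN else 0)) :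
    (Ddag.mulVec (fun _ => (1 : ℝ)) =
      fun i : Fin N => if (i : ℕ) = N - 1 then -(1 / ωN) else 0) ∧
    (Ddag⁻¹.mulVec (fun i : Fin N => if (i : ℕ) = N - 1 then (1 : ℝ) else 0) =
      fun _ : Fin N => -ωN) := by
  have h1 : Ddag.mulVec (fun _ => (1 : ℝ)) =
      fun i : Fin N => if (i : ℕ) = N - 1 then -(1 / ωN) else 0 := by
    funext i
    have := hD 1 (by simp) i
    simp only [Polynomial.eval_one, map_one, Polynomial.derivative_one,
      Polynomial.eval_zero] at this
    rw [this]
    split <;> simp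
  refine ⟨h1, ?_⟩
  have h2 : Ddag.mulVec (fun _ : Fin N => -ωN) =
      fun i : Fin N => if (i : ℕ) = N - 1 then (1 : ℝ) else 0 := by
    have : (fun _ : Fin N => -ωN) = (-ωN) • (fun _ : Fin N => (1 : ℝ)) := by
      funext i; simp
    rw [this, Matrix.mulVec_smul, h1]
    funext i
    split <;> rename_i h <;> simp [h, hω.ne']
  rw [← h2, Matrix.mulVec_mulVec, Matrix.nonsing_inv_mul _ hInv, Matrix.one_mulVec]
end

section
/- Let X be a Banach space, Y a normed linear space, F : X → 2^Y a set-valued map, and T : X → Y continuously Fréchet differentiable in the ball B_r(θ*) for some θ* ∈ X and r > 0. Assume: (C1) T(θ*) + δ ∈ F(θ*) for some δ ∈ Y; (C2) ‖∇T(θ) - ∇T(θ*)‖ ≤ ε for all θ ∈ B_r(θ*); (C3) the map (F - ∇T(θ*))^{-1} is single-valued and Lipschitz continuous with Lipschitz constant γ. If εγ < 1 and ‖δ‖ ≤ (1 - γε)r/γ, then there exists a unique θ ∈ B_r(θ*) such that T(θ) ∈ F(θ), and moreover ‖θ - θ*‖ ≤ γ‖δ‖/(1 - γε). -/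
open Metric

/-- Abstract implicit-function-type result (Dontchev–Hager): if the residual `δ` is small,
the derivative varies by at most `ε` on the ball, and the linearized inclusion has a
single-valued Lipschitz inverse with constant `γ` satisfying `εγ < 1`, then the inclusion
`T(θ) ∈ F(θ)` has a unique solution in the ball `B_r(θ*)`, with
`‖θ - θ*‖ ≤ γ‖δ‖/(1 - γε)`. -/
theorem stmt10 (X Y : Type*) [NormedAddCommGroup X] [NormedSpace ℝ X] [CompleteSpace X]
    [NormedAddCommGroup Y] [NormedSpace ℝ Y]
    (F : X → Set Y) (T : X → Y) (θs : X) (r : ℝ) (hr : 0 < r)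
    (DT : X → X →L[ℝ] Y)
    (hderiv : ∀ θ ∈ closedBall θs r, HasFDerivAt T (DT θ) θ)
    (hcont : ContinuousOn DT (closedBall θs r))
    (δ : Y) (ε γ : ℝ) (hγ : 0 < γ) (hε : 0 ≤ ε)
    (hC1 : T θs + δ ∈ F θs)
    (hC2 : ∀ θ ∈ closedBall θs r, ‖DT θ - DT θs‖ ≤ ε)
    (G : Y → X)
    (hC3single : ∀ (y : Y) (x : X), (y + DT θs x ∈ F x) ↔ x = G y)
    (hC3lip : ∀ y₁ y₂ : Y, ‖G y₁ - G y₂‖ ≤ γ * ‖y₁ - y₂‖)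
    (hεγ : ε * γ < 1) (hδ : ‖δ‖ ≤ (1 - γ * ε) * r / γ) :
    ∃ θ ∈ closedBall θs r, T θ ∈ F θ ∧
      ‖θ - θs‖ ≤ γ / (1 - γ * ε) * ‖δ‖ ∧
      ∀ θ' ∈ closedBall θs r, T θ' ∈ F θ' → θ' = θ := by
  set g : X → Y := fun θ => T θ - DT θs θ with hg
  -- g is ε-Lipschitz on the closed ball
  have hglip : ∀ θ₁ ∈ closedBall θs r, ∀ θ₂ ∈ closedBall θs r,
      ‖g θ₁ - g θ₂‖ ≤ ε * ‖θ₁ - θ₂‖ := by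
    intro θ₁ h₁ θ₂ h₂
    exact (convex_closedBall θs r).norm_image_sub_le_of_norm_hasFDerivWithin_le
      (f := g) (f' := fun x => DT x - DT θs)
      (fun x hx => ((hderiv x hx).sub ((DT θs).hasFDerivAt)).hasFDerivWithinAt)
      (fun x hx => hC2 x hx) h₂ h₁
  -- the inclusion is equivalent to a fixed-point equation
  have hiff : ∀ θ : X, (T θ ∈ F θ) ↔ θ = G (g θ) := by
    intro θ
    have := hC3single (g θ) θ
    rwa [hg, sub_add_cancel] at this
  -- θs is the value of G at T θs + δ - DT θs θs
  have hθs : θs = G (g θs + δ) := by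
    have := hC3single (g θs + δ) θs
    rw [← this]
    rw [hg]
    simpa [sub_add_eq_add_sub, sub_add_cancel] using hC1
  set Φ : X → X := fun θ => G (g θ) with hΦ
  have hΦlip : ∀ θ₁ ∈ closedBall θs r, ∀ θ₂ ∈ closedBall θs r,
      ‖Φ θ₁ - Φ θ₂‖ ≤ (γ * ε) * ‖θ₁ - θ₂‖ := by
    intro θ₁ h₁ θ₂ h₂
    calc ‖Φ θ₁ - Φ θ₂‖ ≤ γ * ‖g θ₁ - g θ₂‖ := hC3lip _ _
      _ ≤ γ * (ε * ‖θ₁ - θ₂‖) := by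
          exact mul_le_mul_of_nonneg_left (hglip θ₁ h₁ θ₂ h₂) hγ.le
      _ = (γ * ε) * ‖θ₁ - θ₂‖ := by ring
  have hγδ : γ * ‖δ‖ ≤ (1 - γ * ε) * r := by
    have := mul_le_mul_of_nonneg_left hδ hγ.le
    calc γ * ‖δ‖ ≤ γ * ((1 - γ * ε) * r / γ) := this
      _ = (1 - γ * ε) * r := by field_simp
  have hmaps : ∀ θ ∈ closedBall θs r, Φ θ ∈ closedBall θs r := by
    intro θ hθ
    rw [mem_closedBall, dist_eq_norm]
    have h1 : ‖Φ θ - θs‖ ≤ γ * ‖g θ - (g θs + δ)‖ := by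
      conv_lhs => rw [hθs]
      exact hC3lip _ _
    have h2 : ‖g θ - (g θs + δ)‖ ≤ ε * ‖θ - θs‖ + ‖δ‖ := by
      calc ‖g θ - (g θs + δ)‖ = ‖(g θ - g θs) - δ‖ := by rw [sub_add_eq_sub_sub]
        _ ≤ ‖g θ - g θs‖ + ‖δ‖ := norm_sub_le _ _
        _ ≤ ε * ‖θ - θs‖ + ‖δ‖ := by
            have := hglip θ hθ θs (mem_closedBall_self hr.le)
            linarith
    have hθr : ‖θ - θs‖ ≤ r := by rwa [mem_closedBall, dist_eq_norm] at hθ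
    have : ‖Φ θ - θs‖ ≤ γ * ε * ‖θ - θs‖ + γ * ‖δ‖ := by
      calc ‖Φ θ - θs‖ ≤ γ * (ε * ‖θ - θs‖ + ‖δ‖) := le_trans h1
            (mul_le_mul_of_nonneg_left h2 hγ.le)
        _ = γ * ε * ‖θ - θs‖ + γ * ‖δ‖ := by ring
    have hmono : γ * ε * ‖θ - θs‖ ≤ γ * ε * r :=
      mul_le_mul_of_nonneg_left hθr (mul_nonneg hγ.le hε)
    linarith
  -- Banach fixed point on the (complete) closed ball
  set s := closedBall θs r
  haveI : Nonempty s := ⟨⟨θs, mem_closedBall_self hr.le⟩⟩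
  haveI : CompleteSpace s := (isClosed_closedBall : IsClosed (closedBall θs r)).completeSpace_coe
  set f : s → s := fun x => ⟨Φ x, hmaps x x.2⟩ with hf
  have hK0 : (0:ℝ) ≤ γ * ε := mul_nonneg hγ.le hε
  have hK1 : γ * ε < 1 := by linarith [hεγ, mul_comm ε γ ▸ hεγ]
  have hcontr : ContractingWith ⟨γ * ε, hK0⟩ f := by
    constructor
    · exact_mod_cast hK1
    · apply LipschitzWith.of_dist_le_mul
      intro x y
      have := hΦlip x x.2 y y.2
      have h' : dist (f x) (f y) ≤ γ * ε * dist x y := by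
        simpa [hf, Subtype.dist_eq, dist_eq_norm] using this
      exact h'
  obtain ⟨x, hx⟩ := hcontr.exists_fixedPoint (Classical.arbitrary s) (edist_ne_top _ _)
  have hxfix : Φ (x : X) = (x : X) := congrArg Subtype.val hx.1
  refine ⟨(x : X), x.2, ?_, ?_, ?_⟩
  · exact (hiff _).2 hxfix.symm
  · -- norm bound
    have h1 : ‖(x:X) - θs‖ ≤ γ * (ε * ‖(x:X) - θs‖ + ‖δ‖) := by
      have e1 : ‖(x:X) - θs‖ = ‖Φ (x:X) - θs‖ := by rw [hxfix]
      have h2 : ‖g (x:X) - (g θs + δ)‖ ≤ ε * ‖(x:X) - θs‖ + ‖δ‖ := by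
        calc ‖g (x:X) - (g θs + δ)‖ = ‖(g (x:X) - g θs) - δ‖ := by rw [sub_add_eq_sub_sub]
          _ ≤ ‖g (x:X) - g θs‖ + ‖δ‖ := norm_sub_le _ _
          _ ≤ ε * ‖(x:X) - θs‖ + ‖δ‖ := by
              have := hglip (x:X) x.2 θs (mem_closedBall_self hr.le)
              linarith
      calc ‖(x:X) - θs‖ = ‖Φ (x:X) - θs‖ := e1
        _ ≤ γ * ‖g (x:X) - (g θs + δ)‖ := by
            conv_lhs => rw [hθs]
            exact hC3lip _ _
        _ ≤ γ * (ε * ‖(x:X) - θs‖ + ‖δ‖) := mul_le_mul_of_nonneg_left h2 hγ.le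
    have hpos : 0 < 1 - γ * ε := by linarith
    rw [div_mul_eq_mul_div, le_div_iff₀ hpos]
    nlinarith [norm_nonneg ((x:X) - θs), norm_nonneg δ]
  · intro θ' hθ' hTθ'
    have hfix' : θ' = Φ θ' := (hiff θ').1 hTθ'
    have : ‖θ' - (x:X)‖ ≤ (γ * ε) * ‖θ' - (x:X)‖ := by
      calc ‖θ' - (x:X)‖ = ‖Φ θ' - Φ (x:X)‖ := by rw [← hfix', hxfix]
        _ ≤ (γ * ε) * ‖θ' - (x:X)‖ := hΦlip θ' hθ' (x:X) x.2
    have h0 : ‖θ' - (x:X)‖ = 0 := by nlinarith [norm_nonneg (θ' - (x:X))]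
    have := norm_eq_zero.1 h0
    exact sub_eq_zero.1 this
end
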